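/- Let γ > 1, δ > 0, and α a positive C² solution of α^{3γ-2} α'' = δ on [0,∞) with α(0)=α₀>0, α'(0)=α₁. Then α is defined and bounded below by a positive constant on [0,∞): in fact α(t)^{3-3γ} ≤ (3γ-3)/(2δ) · (α₁² + (2δ/(3γ-3)) α₀^{3-3γ}) for all t, so α(t) ≥ c for some c > 0 independent of t. -/

import Mathlib

/-- Uniform positive lower bound for solutions of the self-similar ODE. -/
theorem stmt_2 (γ δ α₀ α₁ : ℝ) (hγ : 1 < γ) (hδ : 0 < δ) (hα₀ : 0 < α₀)
    (α : ℝ → ℝ) (hC2 : ContDiff ℝ 2 α)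
    (hpos : ∀ t, 0 ≤ t → 0 < α t)
    (hODE : ∀ t, 0 ≤ t → α t ^ (3 * γ - 2) * deriv (deriv α) t = δ)
    (h0 : α 0 = α₀) (h0' : deriv α 0 = α₁) :
    (∀ t, 0 ≤ t →
      α t ^ (3 - 3 * γ) ≤ (3 * γ - 3) / (2 * δ) *
        (α₁ ^ 2 + (2 * δ / (3 * γ - 3)) * α₀ ^ (3 - 3 * γ))) ∧
    ∃ c : ℝ, 0 < c ∧ ∀ t, 0 ≤ t → c ≤ α t := by
  have hp : (0:ℝ) < 3 * γ - 3 := by linarith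
  have hne : (3:ℝ) * γ - 3 ≠ 0 := ne_of_gt hp
  set E : ℝ → ℝ := fun t => deriv α t ^ 2 + (2 * δ / (3 * γ - 3)) * α t ^ (3 - 3 * γ)
    with hE
  have hα1 : ContDiff ℝ 1 (deriv α) := by
    have h2 : ContDiff ℝ ((1 : ℕ) + 1) α := by exact_mod_cast hC2
    exact (contDiff_succ_iff_deriv.mp h2).2.2
  have hd2 : ∀ t, HasDerivAt (deriv α) (deriv (deriv α) t) t :=
    fun t => ((hα1.differentiable (by norm_num)) t).hasDerivAt
  have hd1 : ∀ t, HasDerivAt α (deriv α t) t :=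
    fun t => ((hC2.differentiable (by norm_num)) t).hasDerivAt
  have key : ∀ t, 0 ≤ t → HasDerivAt E 0 t := by
    intro t ht
    have hat := hpos t ht
    have hO := hODE t ht
    have happ : (0:ℝ) < α t ^ (3 * γ - 2) := Real.rpow_pos_of_pos hat _
    have h2'' : deriv (deriv α) t = δ * (α t ^ (3 * γ - 2))⁻¹ := by
      field_simp
      linarith [hO]
    have h1 : HasDerivAt (fun s => deriv α s ^ 2)
        (2 * deriv α t * deriv (deriv α) t) t := by
      have := (hd2 t).fun_pow 2
      simpa [mul_comm, mul_assoc, mul_left_comm] using this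
    have h2 : HasDerivAt (fun s => α s ^ (3 - 3 * γ))
        (deriv α t * (3 - 3 * γ) * α t ^ (3 - 3 * γ - 1)) t :=
      (hd1 t).rpow_const (Or.inl (ne_of_gt hat))
    have hsum := h1.add (h2.const_mul (2 * δ / (3 * γ - 3)))
    have hrw : α t ^ (3 - 3 * γ - 1) = (α t ^ (3 * γ - 2))⁻¹ := by
      rw [← Real.rpow_neg hat.le]
      congr 1
      ring
    rw [hE]
    refine hsum.congr_deriv ?_
    rw [h2'', hrw]
    have hc : 2 * δ / (3 * γ - 3) * (3 - 3 * γ) = -(2 * δ) := by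
      rw [div_mul_eq_mul_div, show (3:ℝ) - 3 * γ = -(3 * γ - 3) by ring, mul_neg, neg_div,
        mul_div_assoc, div_self hne, mul_one]
    linear_combination (deriv α t * (α t ^ (3 * γ - 2))⁻¹) * hc
  have hEcont : ContinuousOn E (Set.Ici 0) := by
    apply ContinuousOn.add
    · exact (hα1.continuous.pow 2).continuousOn
    · exact continuousOn_const.mul
        ((hC2.continuous.continuousOn).rpow_const
          (fun t ht => Or.inl (hpos t ht).ne'))
  have hEconst : ∀ t, 0 ≤ t → E t = E 0 := by
    intro t ht
    exact constant_of_has_deriv_right_zero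
      (hEcont.mono (Set.Icc_subset_Ici_self))
      (fun x hx => (key x hx.1).hasDerivWithinAt)
      t (Set.mem_Icc.mpr ⟨ht, le_rfl⟩)
  have hE0 : E 0 = α₁ ^ 2 + (2 * δ / (3 * γ - 3)) * α₀ ^ (3 - 3 * γ) := by
    simp [hE, h0, h0']
  have hbound : ∀ t, 0 ≤ t →
      α t ^ (3 - 3 * γ) ≤ (3 * γ - 3) / (2 * δ) *
        (α₁ ^ 2 + (2 * δ / (3 * γ - 3)) * α₀ ^ (3 - 3 * γ)) := by
    intro t ht
    have h1 : (2 * δ / (3 * γ - 3)) * α t ^ (3 - 3 * γ) ≤ E t := by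
      have : 0 ≤ deriv α t ^ 2 := sq_nonneg _
      simp only [hE]; linarith
    rw [hEconst t ht, hE0] at h1
    calc α t ^ (3 - 3 * γ)
        = (3 * γ - 3) / (2 * δ) * (2 * δ / (3 * γ - 3) * α t ^ (3 - 3 * γ)) := by
          rw [← mul_assoc, div_mul_div_comm, mul_comm (3 * γ - 3) (2 * δ),
            div_self (mul_ne_zero (by positivity) hne), one_mul]
      _ ≤ (3 * γ - 3) / (2 * δ) *
          (α₁ ^ 2 + 2 * δ / (3 * γ - 3) * α₀ ^ (3 - 3 * γ)) := by
          apply mul_le_mul_of_nonneg_left h1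
          positivity
  refine ⟨hbound, ?_⟩
  set K : ℝ := (3 * γ - 3) / (2 * δ) *
      (α₁ ^ 2 + (2 * δ / (3 * γ - 3)) * α₀ ^ (3 - 3 * γ)) with hK
  have hKpos : 0 < K := by
    have h0b := hbound 0 le_rfl
    calc (0:ℝ) < α 0 ^ (3 - 3 * γ) := Real.rpow_pos_of_pos (hpos 0 le_rfl) _
      _ ≤ K := h0b
  refine ⟨(K⁻¹) ^ (3 * γ - 3)⁻¹, Real.rpow_pos_of_pos (inv_pos.mpr hKpos) _, ?_⟩
  intro t ht
  have hat := hpos t ht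
  have hb := hbound t ht
  have hneg : α t ^ (3 - 3 * γ) = (α t ^ (3 * γ - 3))⁻¹ := by
    rw [← Real.rpow_neg hat.le]
    norm_num
  rw [hneg] at hb
  have hKinv : K⁻¹ ≤ α t ^ (3 * γ - 3) := by
    have hpos' : (0:ℝ) < α t ^ (3 * γ - 3) := Real.rpow_pos_of_pos hat _
    rw [inv_le_comm₀ hKpos hpos']
    exact hb
  have := Real.rpow_le_rpow (inv_pos.mpr hKpos).le hKinv
    (inv_nonneg.mpr hp.le)
  calc (K⁻¹) ^ (3 * γ - 3)⁻¹ ≤ (α t ^ (3 * γ - 3)) ^ (3 * γ - 3)⁻¹ := this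
    _ = α t := by
        rw [← Real.rpow_mul hat.le, mul_inv_cancel₀ hne, Real.rpow_one]
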